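/- For coprime positive integers m and n and an (m,n)-Dyck path D, the area of D (number of lattice cells strictly between D and the main diagonal) equals (1/n) * (sum over j = 1 to n of the rank of the j-th South end of D) minus (n-1)/2. Equivalently, n * area(D) = (sum of the starting ranks of the North steps of D) - n*(n-1)/2. -/

import Mathlib

/-- An `(m,n)`-Dyck path is encoded by `f : ℕ → ℕ` where `f j` is the number of East
steps before the `j`-th North step (for `j < n`).  The area is the number of lattice
cells between the path and the diagonal: the cell with southwest corner `(i,j)` lies
below the path iff `f j ≤ i`, and strictly above the diagonal iff `n*(i+1) ≤ m*j`. -/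
def areaF (m n : ℕ) (f : ℕ → ℕ) : ℕ :=
  ∑ j ∈ Finset.range n,
    ((Finset.range m).filter (fun i => f j ≤ i ∧ n * (i + 1) ≤ m * j)).card

lemma row_card (m n : ℕ) (hn : 0 < n) (f : ℕ → ℕ) (j : ℕ) (hj : j < n) :
    ((Finset.range m).filter (fun i => f j ≤ i ∧ n * (i + 1) ≤ m * j)).card
      = m * j / n - f j := by
  have hdivm : m * j / n ≤ m := by
    calc m * j / n ≤ m * n / n := Nat.div_le_div_right (Nat.mul_le_mul_left m hj.le)
    _ = m := Nat.mul_div_cancel m hn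
  have : (Finset.range m).filter (fun i => f j ≤ i ∧ n * (i + 1) ≤ m * j)
      = Finset.Ico (f j) (m * j / n) := by
    ext i
    simp only [Finset.mem_filter, Finset.mem_range, Finset.mem_Ico]
    constructor
    · rintro ⟨_, h1, h2⟩
      refine ⟨h1, ?_⟩
      have : i + 1 ≤ m * j / n := (Nat.le_div_iff_mul_le hn).2 (by linarith [h2])
      omega
    · rintro ⟨h1, h2⟩
      have h3 : (i + 1) * n ≤ m * j := Nat.div_mul_le_self _ n |>.trans' (Nat.mul_le_mul_right n h2)
      exact ⟨by omega, h1, by linarith⟩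
  rw [this, Nat.card_Ico]

lemma sum_mod_perm (m n : ℕ) (h : Nat.Coprime m n) :
    ∑ j ∈ Finset.range n, (m * j % n) = ∑ j ∈ Finset.range n, j := by
  have hmaps : ∀ j ∈ Finset.range n, m * j % n ∈ Finset.range n := by
    intro j hj
    simp only [Finset.mem_range] at *
    exact Nat.mod_lt _ (by omega)
  have hinj : ∀ a₁ a₂ : ℕ, a₁ ∈ Finset.range n → a₂ ∈ Finset.range n →
      m * a₁ % n = m * a₂ % n → a₁ = a₂ := by
    intro a b ha hb hab
    simp only [Finset.mem_range] at ha hb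
    have : a ≡ b [MOD n] := Nat.ModEq.cancel_left_of_coprime h.symm hab
    have := this.eq_of_lt_of_lt ha hb
    exact this
  refine Finset.sum_bij (fun j _ => m * j % n) hmaps (fun a₁ ha₁ a₂ ha₂ => hinj a₁ a₂ ha₁ ha₂) ?_ (fun _ _ => rfl)
  intro b hb
  obtain ⟨a, ha, hab⟩ := Finset.surj_on_of_inj_on_of_card_le
    (fun j _ => m * j % n) hmaps hinj le_rfl b hb
  exact ⟨a, ha, hab.symm⟩

/-- For coprime positive `m, n` and an `(m,n)`-Dyck path, we have
`n * area(D) = (sum of the starting ranks of the North steps of D) - n*(n-1)/2`. -/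
theorem sweep_stmt4 (m n : ℕ) (hm : 0 < m) (hn : 0 < n) (h : Nat.Coprime m n)
    (f : ℕ → ℕ)
    (hmono : ∀ j k, j ≤ k → k < n → f j ≤ f k)
    (hfm : ∀ j < n, f j ≤ m)
    (hdyck : ∀ j < n, n * f j ≤ m * j) :
    (n : ℤ) * areaF m n f =
      (∑ j ∈ Finset.range n, ((m : ℤ) * j - (n : ℤ) * f j)) - ((n * (n - 1) / 2 : ℕ) : ℤ) := by
  have key : ∀ j ∈ Finset.range n,
      (n : ℤ) * (((Finset.range m).filter
        (fun i => f j ≤ i ∧ n * (i + 1) ≤ m * j)).card : ℤ)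
      = ((m : ℤ) * j - (n : ℤ) * f j) - ((m * j % n : ℕ) : ℤ) := by
    intro j hj
    simp only [Finset.mem_range] at hj
    rw [row_card m n hn f j hj]
    have hle : f j ≤ m * j / n := (Nat.le_div_iff_mul_le hn).2 (by
      have := hdyck j hj; linarith)
    have hdm : n * (m * j / n) + m * j % n = m * j := Nat.div_add_mod _ _
    have hdm' : (n : ℤ) * ((m * j / n : ℕ) : ℤ) + ((m * j % n : ℕ) : ℤ) = (m : ℤ) * j := by
      exact_mod_cast congrArg (Nat.cast : ℕ → ℤ) hdm
    rw [Nat.cast_sub hle]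
    linear_combination hdm'
  rw [areaF, Nat.cast_sum, Finset.mul_sum, Finset.sum_congr rfl key, Finset.sum_sub_distrib]
  congr 1
  rw [← Nat.cast_sum, sum_mod_perm m n h, Finset.sum_range_id]
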